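/- Combining the path-counting bound and the exponential sum bound: P(‖I^0_1‖_2 ≥ k) ≤ 4^k · P(Σ_{i=1}^k T_i < 1) ≤ 4^k · e^{−c̃ k} ≤ e^{−Ck} for any prescribed C, provided c̃ = C + log 4 + 1, for all sufficiently large k. -/

import Mathlib

open MeasureTheory Filter
open scoped ENNReal

/-- Lattice sites of `ℤ²`. -/
abbrev Site := ℤ × ℤ

/-- Combining the path-counting bound and the exponential-sum bound:
if `P(‖I^0_1‖₂ ≥ k) ≤ 4^k · P(∑_{i=1}^k T_i < 1)` for all `k`, and
`P(∑_{i=1}^k T_i < 1) ≤ e^{−c̃ k}` with `c̃ = C + log 4 + 1` for all large `k`, then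
`P(‖I^0_1‖₂ ≥ k) ≤ e^{−Ck}` for all sufficiently large `k`. -/
theorem stmt17 {Ω Ω' : Type*} [MeasurableSpace Ω] [MeasurableSpace Ω']
    (μ : Measure Ω) [IsProbabilityMeasure μ] (μ' : Measure Ω') [IsProbabilityMeasure μ']
    (I : Ω → Set Site) (T : ℕ → Ω' → ℝ) (C : ℝ) (hC : 0 < C)
    (h1 : ∀ k : ℕ, μ {ω | ∃ y ∈ I ω, (k : ℝ) ≤ Real.sqrt ((y.1 : ℝ) ^ 2 + (y.2 : ℝ) ^ 2)}
        ≤ 4 ^ k * μ' {ω' | ∑ i ∈ Finset.Icc 1 k, T i ω' < 1})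
    (h2 : ∀ᶠ k : ℕ in atTop, μ' {ω' | ∑ i ∈ Finset.Icc 1 k, T i ω' < 1}
        ≤ ENNReal.ofReal (Real.exp (-(C + Real.log 4 + 1) * k))) :
    ∀ᶠ k : ℕ in atTop,
      μ {ω | ∃ y ∈ I ω, (k : ℝ) ≤ Real.sqrt ((y.1 : ℝ) ^ 2 + (y.2 : ℝ) ^ 2)}
        ≤ ENNReal.ofReal (Real.exp (-C * k)) := by
  filter_upwards [h2] with k hk
  calc μ {ω | ∃ y ∈ I ω, (k : ℝ) ≤ Real.sqrt ((y.1 : ℝ) ^ 2 + (y.2 : ℝ) ^ 2)}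
      ≤ 4 ^ k * μ' {ω' | ∑ i ∈ Finset.Icc 1 k, T i ω' < 1} := h1 k
    _ ≤ 4 ^ k * ENNReal.ofReal (Real.exp (-(C + Real.log 4 + 1) * k)) := by
        exact mul_le_mul_right hk _
    _ = ENNReal.ofReal ((4 : ℝ) ^ k * Real.exp (-(C + Real.log 4 + 1) * k)) := by
        rw [ENNReal.ofReal_mul (by positivity)]
        congr 1
        rw [ENNReal.ofReal_pow (by norm_num)]
        norm_num
    _ ≤ ENNReal.ofReal (Real.exp (-C * k)) := by
        apply ENNReal.ofReal_le_ofReal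
        have h4 : (4 : ℝ) ^ k = Real.exp (k * Real.log 4) := by
          rw [← Real.rpow_natCast, Real.rpow_def_of_pos (by norm_num), mul_comm]
        rw [h4, ← Real.exp_add, Real.exp_le_exp]
        have : (0 : ℝ) ≤ k := Nat.cast_nonneg k
        nlinarith
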